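/- arXiv:1207.6750 — 2 statements merged into one kernel-verified Lean document; each statement's English description precedes it below -/
import Mathlib

section
/- With notation as above (det(I - A·z) = d_{N-r}·∏_k (z-θ_k)^{e_k} of degree N-r, partial fraction coefficients A_{k,j}), the coefficient m_{N-2-r} of z^{N-2-r} in sum(adj(I - A·z)·A) satisfies m_{N-2-r} = ∑_{k=1}^n A_{k,2} - ∑_{k=1}^n A_{k,1}·(θ_1 e_1 + ... + θ_k (e_k - 1) + ... + θ_n e_n), where A_{k,2} is taken to be 0 when e_k = 1. -/
open Polynomial Matrix

/-- The sum of all the entries of a matrix. -/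
def sumEntries {R : Type*} [AddCommMonoid R] {N : ℕ} (M : Matrix (Fin N) (Fin N) R) : R :=
  ∑ i, ∑ j, M i j

/-- `det(I - A·z)` over `ℂ`. -/
noncomputable def detIsubAz {N : ℕ} (A : Matrix (Fin N) (Fin N) ℂ) : ℂ[X] :=
  ((1 : Matrix (Fin N) (Fin N) ℂ[X]) - (X : ℂ[X]) • A.map C).det

/-- `sum(adj(I - A·z)·A)` over `ℂ`. -/
noncomputable def sumAdjIsubAzA {N : ℕ} (A : Matrix (Fin N) (Fin N) ℂ) : ℂ[X] :=
  sumEntries (adjugate ((1 : Matrix (Fin N) (Fin N) ℂ[X]) - (X : ℂ[X]) • A.map C) * A.map C)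

/-- With `det(I - A·z) = d·∏ (z-θ_k)^{e_k}` of degree `N-r` and partial fraction coefficients
`A_{k,j}`, the coefficient `m_{N-2-r}` of `z^{N-2-r}` in `sum(adj(I - A·z)·A)` equals
`∑_k A_{k,2} - ∑_k A_{k,1}·(θ_1 e_1 + ⋯ + θ_k (e_k - 1) + ⋯ + θ_n e_n)` (where `A_{k,2} = 0`
when `e_k = 1`). -/
theorem stmt14 {N n r : ℕ} (A : Matrix (Fin N) (Fin N) ℤ)
    (θ : Fin n → ℂ) (hθ : Function.Injective θ) (e : Fin n → ℕ) (he : ∀ k, 1 ≤ e k)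
    (d : ℂ) (hd : d ≠ 0) (hr : r + 2 ≤ N)
    (hdegdet : (detIsubAz (A.map ((↑) : ℤ → ℂ))).natDegree = N - r)
    (hfact : detIsubAz (A.map ((↑) : ℤ → ℂ)) = C d * ∏ k, (X - C (θ k)) ^ (e k))
    (hdeg : (sumAdjIsubAzA (A.map ((↑) : ℤ → ℂ))).natDegree
      < (detIsubAz (A.map ((↑) : ℤ → ℂ))).natDegree)
    (Acoef : Fin n → ℕ → ℂ) (hA2 : ∀ k, e k = 1 → Acoef k 2 = 0)
    (hpf : algebraMap ℂ[X] (RatFunc ℂ) (sumAdjIsubAzA (A.map ((↑) : ℤ → ℂ)))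
          / algebraMap ℂ[X] (RatFunc ℂ) (detIsubAz (A.map ((↑) : ℤ → ℂ)))
        = RatFunc.C d⁻¹ * ∑ k, ∑ j ∈ Finset.Icc 1 (e k),
            RatFunc.C (Acoef k j) / (RatFunc.X - RatFunc.C (θ k)) ^ j) :
    (sumAdjIsubAzA (A.map ((↑) : ℤ → ℂ))).coeff (N - 2 - r)
      = ∑ k, Acoef k 2 - ∑ k, Acoef k 1 * ((∑ l, (e l : ℂ) * θ l) - θ k) := by
  classical
  set B := A.map ((↑) : ℤ → ℂ) with hB
  set P := sumAdjIsubAzA B with hPdef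
  set D := detIsubAz B with hDdef
  have hDne : D ≠ 0 := by
    rw [hfact]
    exact mul_ne_zero (C_ne_zero.mpr hd)
      (monic_prod_of_monic _ _ fun k _ => (monic_X_sub_C _).pow _).ne_zero
  set φ := algebraMap ℂ[X] (RatFunc ℂ) with hφ
  have hφinj : Function.Injective φ := IsFractionRing.injective _ _
  have hφDne : φ D ≠ 0 := fun h => hDne (hφinj (by simpa using h))
  -- sum of multiplicities equals N - r
  have hm : ∑ k, e k = N - r := by
    rw [hfact, natDegree_C_mul hd, natDegree_prod _ _
      (fun k _ => pow_ne_zero _ (X_sub_C_ne_zero _))] at hdegdet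
    simpa [natDegree_pow, natDegree_X_sub_C] using hdegdet
  have hm2 : 2 ≤ ∑ k, e k := by omega
  -- the polynomial identity obtained by clearing denominators
  have key : P = ∑ k, ∑ j ∈ Finset.Icc 1 (e k), C (Acoef k j) *
      ((X - C (θ k)) ^ (e k - j) * ∏ l ∈ Finset.univ.erase k, (X - C (θ l)) ^ (e l)) := by
    apply hφinj
    have hP' : φ P = (RatFunc.C d⁻¹ * ∑ k, ∑ j ∈ Finset.Icc 1 (e k),
        RatFunc.C (Acoef k j) / (RatFunc.X - RatFunc.C (θ k)) ^ j) * φ D :=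
      (div_eq_iff hφDne).mp hpf
    have hφX : ∀ c : ℂ, φ (X - C c) = RatFunc.X - RatFunc.C c := fun c => by
      rw [map_sub, RatFunc.algebraMap_C, RatFunc.algebraMap_X]
    have hφD : φ D = RatFunc.C d * ∏ k, (RatFunc.X - RatFunc.C (θ k)) ^ (e k) := by
      rw [hfact, _root_.map_mul, map_prod, RatFunc.algebraMap_C]
      simp_rw [map_pow, hφX]
    rw [hP', hφD, ← mul_assoc, mul_comm _ (RatFunc.C d), ← mul_assoc, ← _root_.map_mul,
      mul_inv_cancel₀ hd, _root_.map_one, one_mul, Finset.sum_mul, map_sum]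
    refine Finset.sum_congr rfl fun k _ => ?_
    rw [Finset.sum_mul, map_sum]
    refine Finset.sum_congr rfl fun j hj => ?_
    simp only [Finset.mem_Icc] at hj
    have hu' : (RatFunc.X - RatFunc.C (θ k)) ≠ 0 := by
      intro h
      exact X_sub_C_ne_zero (θ k) (hφinj (by rw [hφX, h, map_zero]))
    rw [_root_.map_mul, _root_.map_mul, map_pow, RatFunc.algebraMap_C, hφX, map_prod]
    simp_rw [map_pow, hφX]
    rw [← Finset.mul_prod_erase Finset.univ _ (Finset.mem_univ k)]
    have hpow : (RatFunc.X - RatFunc.C (θ k)) ^ (e k)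
        = (RatFunc.X - RatFunc.C (θ k)) ^ j * (RatFunc.X - RatFunc.C (θ k)) ^ (e k - j) := by
      rw [← pow_add]; congr 1; omega
    rw [hpow]
    field_simp
  -- coefficient of each basic term
  set T : ℂ := ∑ l, (e l : ℂ) * θ l with hT
  have hcoeff : ∀ k : Fin n, ∀ j ∈ Finset.Icc 1 (e k),
      ((X - C (θ k)) ^ (e k - j) *
        ∏ l ∈ Finset.univ.erase k, (X - C (θ l)) ^ (e l)).coeff (∑ l, e l - 2)
      = if j = 1 then -(T - θ k) else if j = 2 then 1 else 0 := by
    intro k j hj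
    simp only [Finset.mem_Icc] at hj
    have hek_le : e k ≤ ∑ l, e l :=
      Finset.single_le_sum (fun l _ => Nat.zero_le _) (Finset.mem_univ k)
    have herase : ∑ l ∈ Finset.univ.erase k, e l = (∑ l, e l) - e k := by
      have := Finset.sum_erase_add Finset.univ e (Finset.mem_univ k)
      omega
    have hmon1 : ((X - C (θ k)) ^ (e k - j)).Monic := (monic_X_sub_C _).pow _
    have hmon2 : (∏ l ∈ Finset.univ.erase k, (X - C (θ l)) ^ (e l)).Monic :=
      monic_prod_of_monic _ _ fun l _ => (monic_X_sub_C _).pow _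
    have hmonic := hmon1.mul hmon2
    have hdegR : ((X - C (θ k)) ^ (e k - j) *
        ∏ l ∈ Finset.univ.erase k, (X - C (θ l)) ^ (e l)).natDegree = (∑ l, e l) - j := by
      rw [hmon1.natDegree_mul hmon2, natDegree_pow, natDegree_X_sub_C, mul_one,
        natDegree_prod _ _ (fun l _ => pow_ne_zero _ (X_sub_C_ne_zero _))]
      simp_rw [natDegree_pow, natDegree_X_sub_C, mul_one]
      omega
    rcases eq_or_ne j 1 with h1 | h1
    · subst h1
      simp only [if_pos rfl]
      have hpos : 0 < ((X - C (θ k)) ^ (e k - 1) *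
          ∏ l ∈ Finset.univ.erase k, (X - C (θ l)) ^ (e l)).natDegree := by omega
      have : (∑ l, e l) - 2 = ((X - C (θ k)) ^ (e k - 1) *
          ∏ l ∈ Finset.univ.erase k, (X - C (θ l)) ^ (e l)).natDegree - 1 := by omega
      rw [this, ← nextCoeff_of_natDegree_pos hpos, hmon1.nextCoeff_mul hmon2,
        (monic_X_sub_C _).nextCoeff_pow, nextCoeff_X_sub_C,
        Monic.nextCoeff_prod _ _ (fun l _ => (monic_X_sub_C _).pow _)]
      simp_rw [(monic_X_sub_C _).nextCoeff_pow, nextCoeff_X_sub_C]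
      have hsub : ∑ l ∈ Finset.univ.erase k, (e l : ℂ) * θ l = T - (e k : ℂ) * θ k := by
        rw [hT, ← Finset.sum_erase_add Finset.univ _ (Finset.mem_univ k)]; ring
      have hcast : ((e k - 1 : ℕ) : ℂ) = (e k : ℂ) - 1 := by
        rw [Nat.cast_sub (he k)]; norm_num
      simp only [smul_eq_mul, nsmul_eq_mul, Finset.sum_neg_distrib]
      rw [show ∀ s : Finset (Fin n), ∑ l ∈ s, (e l : ℂ) * -θ l = -∑ l ∈ s, (e l : ℂ) * θ l from
        fun s => by rw [← Finset.sum_neg_distrib]; exact Finset.sum_congr rfl fun l _ => by ring]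
      rw [hsub, hcast]
      simp only [if_true]
      ring
    rcases eq_or_ne j 2 with h2 | h2
    · subst h2
      simp only [if_neg h1, if_pos rfl]
      have : (∑ l, e l) - 2 = ((X - C (θ k)) ^ (e k - 2) *
          ∏ l ∈ Finset.univ.erase k, (X - C (θ l)) ^ (e l)).natDegree := by omega
      rw [this, hmonic.coeff_natDegree]
      simp
    · simp only [if_neg h1, if_neg h2]
      apply coeff_eq_zero_of_natDegree_lt
      omega
  -- put it together
  have hidx : N - 2 - r = (∑ l, e l) - 2 := by omega
  rw [key, hidx, finset_sum_coeff]
  simp_rw [finset_sum_coeff, coeff_C_mul]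
  rw [show (∑ k, Acoef k 2) - ∑ k, Acoef k 1 * (T - θ k)
      = ∑ k, (Acoef k 2 - Acoef k 1 * (T - θ k)) from (Finset.sum_sub_distrib _ _).symm]
  refine Finset.sum_congr rfl fun k _ => ?_
  rw [Finset.sum_congr rfl (fun j hj => by rw [hcoeff k j hj])]
  rcases eq_or_lt_of_le (he k) with h1 | h2
  · rw [← h1, hA2 k h1.symm]
    simp
    ring
  · have hset : Finset.Icc 1 (e k) = insert 1 (insert 2 (Finset.Icc 3 (e k))) := by
      ext x
      simp only [Finset.mem_Icc, Finset.mem_insert]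
      omega
    rw [hset, Finset.sum_insert (by simp only [Finset.mem_insert, Finset.mem_Icc]; omega),
      Finset.sum_insert (by simp only [Finset.mem_Icc]; omega),
      Finset.sum_eq_zero (fun j hj => by
        simp only [Finset.mem_Icc] at hj
        rw [if_neg (by omega), if_neg (by omega), mul_zero])]
    norm_num
    ring
end

section
/- Let I be a finite category with N objects and adjacency matrix A, having series Euler characteristic. With deg det(I - A·z) = N-r, factorization det(I - A·z) = d_{N-r}·∏_{k=1}^n (z-θ_k)^{e_k} over ℂ, and partial fraction decomposition sum(adj(I - A·z)·A)/det(I - A·z) = (1/d_{N-r})·∑_k ∑_{j=1}^{e_k} A_{k,j}/(z-θ_k)^j, the identity (1/d_{N-r})·∑_{k=1}^n (-θ_k·A_{k,1} - A_{k,2}) = χ_Σ(I) holds, where A_{k,2} = 0 if e_k = 1. -/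
open Polynomial Matrix

/-- `det(A - I·z)` over `ℂ`. -/
noncomputable def detAsubIz {N : ℕ} (A : Matrix (Fin N) (Fin N) ℂ) : ℂ[X] :=
  (A.map C - (X : ℂ[X]) • (1 : Matrix (Fin N) (Fin N) ℂ[X])).det

/-- `sum(adj(A - I·z))` over `ℂ`. -/
noncomputable def sumAdjAsubIz {N : ℕ} (A : Matrix (Fin N) (Fin N) ℂ) : ℂ[X] :=
  sumEntries (adjugate (A.map C - (X : ℂ[X]) • (1 : Matrix (Fin N) (Fin N) ℂ[X])))

/-- The series Euler characteristic: the value of `sum(adj(A - E·z))/det(A - E·z)` at `z = 0`. -/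
noncomputable def seriesEuler {N : ℕ} (A : Matrix (Fin N) (Fin N) ℂ) : ℂ :=
  RatFunc.eval (RingHom.id ℂ) 0 (RatFunc.mk (sumAdjAsubIz A) (detAsubIz A))


noncomputable section

namespace Stmt16Aux

/-- eval of reflect at nonzero point -/
lemma eval_reflect {M : ℕ} (f : ℂ[X]) (hf : f.natDegree ≤ M) {z : ℂ} (hz : z ≠ 0) :
    (reflect M f).eval z = z ^ M * f.eval z⁻¹ := by
  letI := invertibleOfNonzero (inv_ne_zero hz)
  have h := eval₂_reflect_mul_pow (RingHom.id ℂ) (z⁻¹) M f hf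
  rw [invOf_eq_inv, inv_inv] at h
  have e1 : ∀ (p : ℂ[X]) (w : ℂ), eval₂ (RingHom.id ℂ) w p = p.eval w := fun p w => rfl
  rw [e1, e1] at h
  field_simp at h ⊢
  rw [← h, mul_assoc, ← mul_pow, one_div, inv_mul_cancel₀ hz, one_pow, mul_one]

lemma natDegree_reflect_le {M : ℕ} (f : ℂ[X]) (hf : f.natDegree ≤ M) :
    (reflect M f).natDegree ≤ M := by
  rw [natDegree_le_iff_coeff_eq_zero]
  intro i hi
  rw [coeff_reflect, revAt_eq_self_of_lt hi]
  exact coeff_eq_zero_of_natDegree_lt (lt_of_le_of_lt hf hi)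

lemma coeff_mul_X_monic' (a : ℂ) {p : ℂ[X]} (hp : p.Monic) {m : ℕ}
    (hm : p.natDegree + 1 = m) : (X * (C a * p)).coeff m = a := by
  subst hm
  rw [coeff_X_mul, coeff_C_mul, hp.coeff_natDegree, mul_one]

lemma coeff_mul_X_zero (a : ℂ) {p : ℂ[X]} {m mp : ℕ} (hp : p.natDegree ≤ mp)
    (h : mp + 1 < m) : (X * (C a * p)).coeff m = 0 := by
  apply coeff_eq_zero_of_natDegree_lt
  calc (X * (C a * p)).natDegree ≤ X.natDegree + (C a * p).natDegree := natDegree_mul_le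
    _ ≤ 1 + ((C a).natDegree + p.natDegree) := by
        exact add_le_add natDegree_X_le natDegree_mul_le
    _ ≤ 1 + (0 + mp) := by rw [natDegree_C]; omega
    _ < m := by omega

lemma coeff_mul_X_monic (a : ℂ) {p : ℂ[X]} (hp : p.Monic) {m : ℕ} (hm : p.natDegree = m) :
    (X * (C a * p)).coeff m = a * p.nextCoeff := by
  cases m with
  | zero =>
    rw [mul_coeff_zero, coeff_X_zero, zero_mul, nextCoeff, hm]
    simp
  | succ m' =>
    rw [coeff_X_mul, coeff_C_mul, nextCoeff_of_natDegree_pos (by omega), hm]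
    simp


section Mat
variable {N : ℕ}

lemma natDegree_adjugate_le (B : Matrix (Fin N) (Fin N) ℂ[X])
    (hB : ∀ i j, (B i j).natDegree ≤ 1) (i j : Fin N) :
    (adjugate B i j).natDegree ≤ N - 1 := by
  rw [adjugate_apply, det_apply]
  refine natDegree_sum_le_of_forall_le _ _ fun σ _ => ?_
  have h1 : (Equiv.Perm.sign σ • ∏ k, (B.updateRow j (Pi.single i 1)) (σ k) k).natDegree
      = (∏ k, (B.updateRow j (Pi.single i 1)) (σ k) k).natDegree := by
    rcases Int.units_eq_one_or (Equiv.Perm.sign σ) with h | h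
    · rw [h, one_smul]
    · rw [h, Units.neg_smul, one_smul, natDegree_neg]
  rw [h1]
  refine (natDegree_prod_le _ _).trans ?_
  have h2 : ∀ k : Fin N, ((B.updateRow j (Pi.single i 1)) (σ k) k).natDegree
      ≤ if σ k = j then 0 else 1 := by
    intro k
    rw [Matrix.updateRow_apply]
    split_ifs with h
    · simp only [Pi.single_apply]
      split_ifs <;> simp
    · exact hB _ _
  refine (Finset.sum_le_sum fun k _ => h2 k).trans ?_
  have h3 : ∀ k : Fin N, (if σ k = j then (0:ℕ) else 1) = if k = σ⁻¹ j then 0 else 1 := by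
    intro k
    have hiff : (σ k = j) ↔ (k = σ⁻¹ j) := by
      constructor
      · intro h; simp [← h]
      · intro h; simp [h]
    simp only [hiff]
  rw [Finset.sum_congr rfl (fun k _ => h3 k),
    ← Finset.add_sum_erase _ _ (Finset.mem_univ (σ⁻¹ j))]
  rw [if_pos rfl, zero_add]
  have h4 : ∀ k ∈ Finset.univ.erase (σ⁻¹ j), (if k = σ⁻¹ j then (0:ℕ) else 1) = 1 :=
    fun k hk => if_neg (Finset.mem_erase.mp hk).1
  rw [Finset.sum_congr rfl h4, Finset.sum_const, smul_eq_mul, mul_one,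
    Finset.card_erase_of_mem (Finset.mem_univ _), Finset.card_univ, Fintype.card_fin]

lemma entries_deg_le₁ (A' : Matrix (Fin N) (Fin N) ℂ) (i j : Fin N) :
    ((A'.map C - (X : ℂ[X]) • 1) i j).natDegree ≤ 1 := by
  simp only [Matrix.sub_apply, Matrix.smul_apply, Matrix.map_apply, Matrix.one_apply,
    smul_eq_mul, mul_ite, mul_one, mul_zero]
  split_ifs <;> compute_degree <;> norm_num

lemma entries_deg_le₂ (A' : Matrix (Fin N) (Fin N) ℂ) (i j : Fin N) :
    (((1 : Matrix (Fin N) (Fin N) ℂ[X]) - (X : ℂ[X]) • A'.map C) i j).natDegree ≤ 1 := by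
  simp only [Matrix.sub_apply, Matrix.smul_apply, Matrix.map_apply, Matrix.one_apply,
    smul_eq_mul]
  split_ifs <;> compute_degree

lemma mapeval₁ (A' : Matrix (Fin N) (Fin N) ℂ) (z : ℂ) :
    ((A'.map C - (X : ℂ[X]) • 1).map (eval z)) = A' - z • 1 := by
  ext i j
  simp only [Matrix.map_apply, Matrix.sub_apply, Matrix.smul_apply, Matrix.one_apply,
    smul_eq_mul, mul_ite, mul_one, mul_zero]
  split_ifs <;> simp

lemma mapeval₂ (A' : Matrix (Fin N) (Fin N) ℂ) (z : ℂ) :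
    (((1 : Matrix (Fin N) (Fin N) ℂ[X]) - (X : ℂ[X]) • A'.map C).map (eval z)) = 1 - z • A' := by
  ext i j
  simp only [Matrix.map_apply, Matrix.sub_apply, Matrix.smul_apply, Matrix.one_apply,
    smul_eq_mul]
  split_ifs <;> simp <;> ring

lemma smul_rel (A' : Matrix (Fin N) (Fin N) ℂ) {z : ℂ} (hz : z ≠ 0) :
    A' - z • 1 = (-z) • ((1 : Matrix (Fin N) (Fin N) ℂ) - z⁻¹ • A') := by
  rw [smul_sub, smul_smul, neg_mul, mul_inv_cancel₀ hz, neg_smul, neg_smul, one_smul,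
    sub_neg_eq_add]
  abel

end Mat


section Sums
variable {N : ℕ}

lemma sumEntries_add (M1 M2 : Matrix (Fin N) (Fin N) ℂ[X]) :
    sumEntries (M1 + M2) = sumEntries M1 + sumEntries M2 := by
  simp [sumEntries, Finset.sum_add_distrib]

lemma sumEntries_smul {R : Type*} [CommRing R] (c : R) (M : Matrix (Fin N) (Fin N) R) :
    sumEntries (c • M) = c * sumEntries M := by
  simp [sumEntries, Finset.mul_sum]

lemma sumEntries_smul_one (c : ℂ[X]) :
    sumEntries (c • (1 : Matrix (Fin N) (Fin N) ℂ[X])) = (N : ℂ[X]) * c := by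
  simp [sumEntries, Matrix.smul_apply, Matrix.one_apply, smul_eq_mul, mul_ite, mul_one,
    mul_zero, Finset.sum_ite_eq', mul_comm]

lemma map_sumEntries (f : ℂ[X] →+* ℂ) (M : Matrix (Fin N) (Fin N) ℂ[X]) :
    f (sumEntries M) = sumEntries (M.map f) := by
  simp [sumEntries, map_sum, Matrix.map_apply]

/-- the polynomial `t = sum adj(I - zA)` -/
noncomputable def tpoly (A' : Matrix (Fin N) (Fin N) ℂ) : ℂ[X] :=
  sumEntries (adjugate ((1 : Matrix (Fin N) (Fin N) ℂ[X]) - (X : ℂ[X]) • A'.map C))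

lemma t_eq (A' : Matrix (Fin N) (Fin N) ℂ) :
    tpoly A' = (N : ℂ[X]) * detIsubAz A' + (X : ℂ[X]) * sumAdjIsubAzA A' := by
  set B := (1 : Matrix (Fin N) (Fin N) ℂ[X]) - (X : ℂ[X]) • A'.map C with hB
  have h := Matrix.adjugate_mul B
  have h3 : adjugate B * B = adjugate B - (X : ℂ[X]) • (adjugate B * A'.map C) := by
    rw [hB, Matrix.mul_sub, Matrix.mul_one, Matrix.mul_smul]
  rw [h3] at h
  have h2 : adjugate B = B.det • (1 : Matrix (Fin N) (Fin N) ℂ[X])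
      + (X : ℂ[X]) • (adjugate B * A'.map C) := sub_eq_iff_eq_add.mp h
  have h4 : sumEntries (adjugate B) = sumEntries (B.det • (1 : Matrix (Fin N) (Fin N) ℂ[X]))
      + sumEntries ((X : ℂ[X]) • (adjugate B * A'.map C)) := by
    conv_lhs => rw [h2]
    exact sumEntries_add _ _
  have h5 : tpoly A' = sumEntries (adjugate B) := by rw [tpoly, hB]
  rw [h5, h4, sumEntries_smul_one, sumEntries_smul]
  rfl

lemma natDegree_tpoly_le (A' : Matrix (Fin N) (Fin N) ℂ) : (tpoly A').natDegree ≤ N - 1 := by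
  rw [tpoly, sumEntries]
  refine natDegree_sum_le_of_forall_le _ _ fun i _ => ?_
  refine natDegree_sum_le_of_forall_le _ _ fun j _ => ?_
  exact natDegree_adjugate_le _ (entries_deg_le₂ A') i j

lemma natDegree_Q_le (A' : Matrix (Fin N) (Fin N) ℂ) : (detAsubIz A').natDegree ≤ N := by
  have : detAsubIz A' = det ((X : ℂ[X]) • ((-1 : Matrix (Fin N) (Fin N) ℂ).map C) + A'.map C) := by
    unfold detAsubIz
    congr 1
    ext i j
    simp only [Matrix.add_apply, Matrix.smul_apply, Matrix.map_apply, Matrix.sub_apply,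
      Matrix.one_apply, Matrix.neg_apply, smul_eq_mul]
    split_ifs <;> simp <;> ring
  rw [this]
  simpa using Polynomial.natDegree_det_X_add_C_le (-1 : Matrix (Fin N) (Fin N) ℂ) A'

lemma reflect_Q (A' : Matrix (Fin N) (Fin N) ℂ) :
    reflect N (detAsubIz A') = C ((-1 : ℂ) ^ N) * detIsubAz A' := by
  apply eq_of_infinite_eval_eq
  refine Set.Infinite.mono ?_ ((Set.finite_singleton (0 : ℂ)).infinite_compl)
  intro z hz
  have hz : z ≠ 0 := hz
  simp only [Set.mem_setOf_eq]
  rw [eval_reflect _ (natDegree_Q_le A') hz, eval_mul, eval_C]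
  have e1 : (detAsubIz A').eval z⁻¹ = det (A' - z⁻¹ • 1) := by
    rw [detAsubIz, ← mapeval₁ A' z⁻¹]
    exact ((evalRingHom z⁻¹).map_det _)
  have e2 : (detIsubAz A').eval z = det ((1 : Matrix (Fin N) (Fin N) ℂ) - z • A') := by
    rw [detIsubAz, ← mapeval₂ A' z]
    exact ((evalRingHom z).map_det _)
  rw [e1, e2, smul_rel A' (inv_ne_zero hz), inv_inv, Matrix.det_smul, Fintype.card_fin]
  have hzz : z ^ N * (-z⁻¹) ^ N = (-1 : ℂ) ^ N := by
    rw [← mul_pow]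
    congr 1
    field_simp
  rw [← mul_assoc, hzz]

lemma reflect_P (A' : Matrix (Fin N) (Fin N) ℂ) :
    sumAdjAsubIz A' = C ((-1 : ℂ) ^ (N - 1)) * reflect (N - 1) (tpoly A') := by
  apply eq_of_infinite_eval_eq
  refine Set.Infinite.mono ?_ ((Set.finite_singleton (0 : ℂ)).infinite_compl)
  intro z hz
  have hz : z ≠ 0 := hz
  simp only [Set.mem_setOf_eq]
  rw [eval_mul, eval_C, eval_reflect _ (natDegree_tpoly_le A') hz]
  have e1 : (sumAdjAsubIz A').eval z = sumEntries (adjugate (A' - z • 1)) := by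
    rw [sumAdjAsubIz]
    have := map_sumEntries (evalRingHom z)
      (adjugate (A'.map C - (X : ℂ[X]) • (1 : Matrix (Fin N) (Fin N) ℂ[X])))
    simp only [coe_evalRingHom] at this
    rw [this]
    congr 1
    have h2 := (evalRingHom z).map_adjugate (A'.map C - (X : ℂ[X]) • (1 : Matrix (Fin N) (Fin N) ℂ[X]))
    simp only [RingHom.mapMatrix_apply, coe_evalRingHom] at h2
    rw [h2, mapeval₁]
  have e2 : (tpoly A').eval z⁻¹ = sumEntries (adjugate ((1 : Matrix (Fin N) (Fin N) ℂ) - z⁻¹ • A')) := by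
    rw [tpoly]
    have := map_sumEntries (evalRingHom z⁻¹)
      (adjugate ((1 : Matrix (Fin N) (Fin N) ℂ[X]) - (X : ℂ[X]) • A'.map C))
    simp only [coe_evalRingHom] at this
    rw [this]
    congr 1
    have h2 := (evalRingHom z⁻¹).map_adjugate ((1 : Matrix (Fin N) (Fin N) ℂ[X]) - (X : ℂ[X]) • A'.map C)
    simp only [RingHom.mapMatrix_apply, coe_evalRingHom] at h2
    rw [h2, mapeval₂]
  rw [e1, e2, smul_rel A' hz, Matrix.adjugate_smul, sumEntries_smul, Fintype.card_fin]
  rw [neg_pow]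
  ring

end Sums

section PF
variable {n : ℕ}

/-- `(X-θ_k)^(e_k-j) ∏_{l≠k} (X-θ_l)^(e_l)` -/
noncomputable def ppoly (θ : Fin n → ℂ) (e : Fin n → ℕ) (k : Fin n) (j : ℕ) : ℂ[X] :=
  (X - C (θ k)) ^ (e k - j) * ∏ l ∈ Finset.univ.erase k, (X - C (θ l)) ^ (e l)

lemma ppoly_monic (θ : Fin n → ℂ) (e : Fin n → ℕ) (k : Fin n) (j : ℕ) :
    (ppoly θ e k j).Monic :=
  ((monic_X_sub_C (θ k)).pow _).mul
    (monic_prod_of_monic _ _ fun l _ => (monic_X_sub_C (θ l)).pow _)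

lemma natDegree_ppoly (θ : Fin n → ℂ) (e : Fin n → ℕ) (k : Fin n) {j : ℕ} (hj : j ≤ e k) :
    (ppoly θ e k j).natDegree = (∑ l, e l) - j := by
  have h1 : (∏ l ∈ Finset.univ.erase k, (X - C (θ l)) ^ (e l)).natDegree
      = ∑ l ∈ Finset.univ.erase k, e l := by
    rw [natDegree_prod _ _ fun l _ => pow_ne_zero _ (X_sub_C_ne_zero _)]
    exact Finset.sum_congr rfl fun l _ => by rw [natDegree_pow, natDegree_X_sub_C, mul_one]
  have h2 : e k + ∑ l ∈ Finset.univ.erase k, e l = ∑ l, e l :=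
    Finset.add_sum_erase _ _ (Finset.mem_univ k)
  rw [ppoly, (((monic_X_sub_C (θ k)).pow _)).natDegree_mul
      (monic_prod_of_monic _ _ fun l _ => (monic_X_sub_C (θ l)).pow _), h1,
    natDegree_pow, natDegree_X_sub_C, mul_one]
  omega

lemma nextCoeff_ppoly1 (θ : Fin n → ℂ) (e : Fin n → ℕ) (k : Fin n) (he : 1 ≤ e k) :
    (ppoly θ e k 1).nextCoeff = θ k - ∑ l, (e l : ℂ) * θ l := by
  rw [ppoly, Monic.nextCoeff_mul ((monic_X_sub_C (θ k)).pow _)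
      (monic_prod_of_monic _ _ fun l _ => (monic_X_sub_C (θ l)).pow _),
    Monic.nextCoeff_pow (monic_X_sub_C _), nextCoeff_X_sub_C,
    Monic.nextCoeff_prod _ _ fun l _ => (monic_X_sub_C (θ l)).pow _]
  have h1 : ∀ l ∈ Finset.univ.erase k, ((X - C (θ l)) ^ (e l)).nextCoeff = e l • (-θ l) :=
    fun l _ => by rw [Monic.nextCoeff_pow (monic_X_sub_C _), nextCoeff_X_sub_C]
  rw [Finset.sum_congr rfl h1]
  have h2 : ∑ l ∈ Finset.univ.erase k, e l • (-θ l)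
      = (∑ l, e l • (-θ l)) - e k • (-θ k) :=
    Finset.sum_erase_eq_sub (Finset.mem_univ k)
  rw [h2]
  have h3 : (∑ l, e l • (-θ l)) = -∑ l, (e l : ℂ) * θ l := by
    rw [← Finset.sum_neg_distrib]
    exact Finset.sum_congr rfl fun l _ => by push_cast [nsmul_eq_mul]; ring
  rw [h3]
  have h4 : ((e k - 1 : ℕ) : ℂ) = (e k : ℂ) - 1 := by
    push_cast [Nat.cast_sub he]; ring
  rw [nsmul_eq_mul, nsmul_eq_mul, h4]
  ring

lemma star_identity {N : ℕ} (A' : Matrix (Fin N) (Fin N) ℂ) (θ : Fin n → ℂ) (e : Fin n → ℕ)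
    (d : ℂ) (Acoef : Fin n → ℕ → ℂ) (hd : d ≠ 0)
    (hfact : detIsubAz A' = C d * ∏ k, (X - C (θ k)) ^ (e k))
    (hpf : algebraMap ℂ[X] (RatFunc ℂ) (sumAdjIsubAzA A')
          / algebraMap ℂ[X] (RatFunc ℂ) (detIsubAz A')
        = RatFunc.C d⁻¹ * ∑ k, ∑ j ∈ Finset.Icc 1 (e k),
            RatFunc.C (Acoef k j) / (RatFunc.X - RatFunc.C (θ k)) ^ j) :
    sumAdjIsubAzA A' = ∑ k, ∑ j ∈ Finset.Icc 1 (e k), C (Acoef k j) * ppoly θ e k j := by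
  classical
  have hprod0 : (∏ k, (X - C (θ k)) ^ (e k)) ≠ 0 :=
    Finset.prod_ne_zero_iff.mpr fun k _ => pow_ne_zero _ (X_sub_C_ne_zero _)
  have hg0 : detIsubAz A' ≠ 0 := by
    rw [hfact]
    exact mul_ne_zero (by simpa using hd) hprod0
  apply RatFunc.algebraMap_injective ℂ
  have h1 : algebraMap ℂ[X] (RatFunc ℂ) (sumAdjIsubAzA A')
      = (RatFunc.C d⁻¹ * ∑ k, ∑ j ∈ Finset.Icc 1 (e k),
          RatFunc.C (Acoef k j) / (RatFunc.X - RatFunc.C (θ k)) ^ j)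
        * algebraMap ℂ[X] (RatFunc ℂ) (detIsubAz A') := by
    rw [← hpf, div_mul_cancel₀ _ (RatFunc.algebraMap_ne_zero hg0)]
  rw [h1, map_sum]
  have hgmap : algebraMap ℂ[X] (RatFunc ℂ) (detIsubAz A')
      = RatFunc.C d * algebraMap ℂ[X] (RatFunc ℂ) (∏ l, (X - C (θ l)) ^ (e l)) := by
    rw [hfact, _root_.map_mul, RatFunc.algebraMap_C]
  rw [hgmap]
  have hCd : RatFunc.C d⁻¹ * RatFunc.C d = 1 := by
    rw [← _root_.map_mul, inv_mul_cancel₀ hd, _root_.map_one]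
  set G := algebraMap ℂ[X] (RatFunc ℂ) (∏ l, (X - C (θ l)) ^ (e l)) with hG
  set S := fun k => ∑ j ∈ Finset.Icc 1 (e k),
      RatFunc.C (Acoef k j) / (RatFunc.X - RatFunc.C (θ k)) ^ j with hS
  have h2 : (RatFunc.C d⁻¹ * ∑ k, S k) * (RatFunc.C d * G) = ∑ k, S k * G := by
    rw [show (RatFunc.C d⁻¹ * ∑ k, S k) * (RatFunc.C d * G)
        = (RatFunc.C d⁻¹ * RatFunc.C d) * ((∑ k, S k) * G) by ring, hCd, one_mul,
      Finset.sum_mul]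
  rw [h2]
  refine Finset.sum_congr rfl fun k _ => ?_
  rw [hS, Finset.sum_mul, map_sum]
  refine Finset.sum_congr rfl fun j hj => ?_
  obtain ⟨hj1, hj2⟩ := Finset.mem_Icc.mp hj
  have hsplit : (∏ l, (X - C (θ l)) ^ (e l)) = (X - C (θ k)) ^ j * ppoly θ e k j := by
    rw [ppoly, ← mul_assoc, ← pow_add, Nat.add_sub_cancel' hj2]
    exact (Finset.mul_prod_erase _ _ (Finset.mem_univ k)).symm
  have hne : (RatFunc.X - RatFunc.C (θ k)) ≠ 0 := by
    have : (RatFunc.X - RatFunc.C (θ k))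
        = algebraMap ℂ[X] (RatFunc ℂ) (X - C (θ k)) := by
      rw [map_sub, RatFunc.algebraMap_X, RatFunc.algebraMap_C]
    rw [this]
    exact RatFunc.algebraMap_ne_zero (X_sub_C_ne_zero _)
  rw [hG, hsplit, _root_.map_mul, map_pow, map_sub, RatFunc.algebraMap_X, RatFunc.algebraMap_C,
    _root_.map_mul, RatFunc.algebraMap_C]
  field_simp

lemma coeffE_XS (θ : Fin n → ℂ) (e : Fin n → ℕ) (Acoef : Fin n → ℕ → ℂ)
    (he : ∀ k, 1 ≤ e k) (hE : 1 ≤ ∑ k, e k) :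
    ((X : ℂ[X]) * ∑ k, ∑ j ∈ Finset.Icc 1 (e k), C (Acoef k j) * ppoly θ e k j).coeff (∑ k, e k)
      = ∑ k, Acoef k 1 := by
  rw [Finset.mul_sum, finset_sum_coeff]
  refine Finset.sum_congr rfl fun k _ => ?_
  rw [Finset.mul_sum, finset_sum_coeff]
  have hkE : e k ≤ ∑ l, e l := Finset.single_le_sum (fun i _ => Nat.zero_le _) (Finset.mem_univ k)
  rw [Finset.sum_eq_single_of_mem 1 (Finset.mem_Icc.mpr ⟨le_refl 1, he k⟩) ?_]
  · exact coeff_mul_X_monic' _ (ppoly_monic θ e k 1) (by rw [natDegree_ppoly θ e k (he k)]; omega)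
  · intro j hj hj1
    obtain ⟨hjl, hjr⟩ := Finset.mem_Icc.mp hj
    exact coeff_mul_X_zero _ (le_of_eq (natDegree_ppoly θ e k hjr)) (by omega)

lemma coeffE1_XS (θ : Fin n → ℂ) (e : Fin n → ℕ) (Acoef : Fin n → ℕ → ℂ)
    (he : ∀ k, 1 ≤ e k) (hA2 : ∀ k, e k = 1 → Acoef k 2 = 0) :
    ((X : ℂ[X]) * ∑ k, ∑ j ∈ Finset.Icc 1 (e k),
        C (Acoef k j) * ppoly θ e k j).coeff ((∑ k, e k) - 1)
      = ∑ k, (Acoef k 1 * (θ k - ∑ l, (e l : ℂ) * θ l) + Acoef k 2) := by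
  rw [Finset.mul_sum, finset_sum_coeff]
  refine Finset.sum_congr rfl fun k _ => ?_
  rw [Finset.mul_sum, finset_sum_coeff]
  have hkE : e k ≤ ∑ l, e l := Finset.single_le_sum (fun i _ => Nat.zero_le _) (Finset.mem_univ k)
  have hF1 : (X * (C (Acoef k 1) * ppoly θ e k 1)).coeff ((∑ l, e l) - 1)
      = Acoef k 1 * (θ k - ∑ l, (e l : ℂ) * θ l) := by
    rw [coeff_mul_X_monic _ (ppoly_monic θ e k 1) (natDegree_ppoly θ e k (he k)),
      nextCoeff_ppoly1 θ e k (he k)]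
  by_cases hek : e k = 1
  · rw [hek, Finset.Icc_self, Finset.sum_singleton, hF1, hA2 k hek, add_zero]
  · have hek2 : 2 ≤ e k := by have := he k; omega
    have hsub : ({1, 2} : Finset ℕ) ⊆ Finset.Icc 1 (e k) := by
      intro x hx
      rw [Finset.mem_insert, Finset.mem_singleton] at hx
      rcases hx with rfl | rfl <;> exact Finset.mem_Icc.mpr ⟨by omega, by omega⟩
    rw [← Finset.sum_subset hsub ?_]
    · rw [Finset.sum_pair (by norm_num : (1 : ℕ) ≠ 2), hF1,
        coeff_mul_X_monic' _ (ppoly_monic θ e k 2)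
          (by rw [natDegree_ppoly θ e k hek2]; omega)]
    · intro j hj hj12
      obtain ⟨hjl, hjr⟩ := Finset.mem_Icc.mp hj
      rw [Finset.mem_insert, Finset.mem_singleton] at hj12
      push_neg at hj12
      exact coeff_mul_X_zero _ (le_of_eq (natDegree_ppoly θ e k hjr))
        (by omega)

lemma W_natDegree (θ : Fin n → ℂ) (e : Fin n → ℕ) :
    (∏ k, (X - C (θ k)) ^ (e k)).natDegree = ∑ k, e k := by
  rw [natDegree_prod _ _ fun l _ => pow_ne_zero _ (X_sub_C_ne_zero _)]
  exact Finset.sum_congr rfl fun l _ => by rw [natDegree_pow, natDegree_X_sub_C, mul_one]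

lemma W_monic (θ : Fin n → ℂ) (e : Fin n → ℕ) : (∏ k, (X - C (θ k)) ^ (e k)).Monic :=
  monic_prod_of_monic _ _ fun l _ => (monic_X_sub_C (θ l)).pow _

lemma W_coeff_top (θ : Fin n → ℂ) (e : Fin n → ℕ) :
    (∏ k, (X - C (θ k)) ^ (e k)).coeff (∑ k, e k) = 1 := by
  rw [← W_natDegree θ e]
  exact (W_monic θ e).coeff_natDegree

lemma W_coeff_next (θ : Fin n → ℂ) (e : Fin n → ℕ) (hE : 1 ≤ ∑ k, e k) :
    (∏ k, (X - C (θ k)) ^ (e k)).coeff ((∑ k, e k) - 1) = -∑ l, (e l : ℂ) * θ l := by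
  have h0 : 0 < (∏ k, (X - C (θ k)) ^ (e k)).natDegree := by rw [W_natDegree]; omega
  have h1 := nextCoeff_of_natDegree_pos h0
  rw [W_natDegree] at h1
  rw [← h1, Monic.nextCoeff_prod _ _ fun l _ => (monic_X_sub_C (θ l)).pow _]
  have h2 : ∀ l ∈ Finset.univ, ((X - C (θ l)) ^ (e l)).nextCoeff = e l • (-θ l) :=
    fun l _ => by rw [Monic.nextCoeff_pow (monic_X_sub_C _), nextCoeff_X_sub_C]
  rw [Finset.sum_congr rfl h2, ← Finset.sum_neg_distrib]
  exact Finset.sum_congr rfl fun l _ => by push_cast [nsmul_eq_mul]; ring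

end PF

end Stmt16Aux

open Stmt16Aux

/-- For a finite category with `N` objects, adjacency matrix `A` and series Euler
characteristic `χ_Σ`, with `det(I - A·z) = d·∏ (z-θ_k)^{e_k}` of degree `N-r` and partial
fraction coefficients `A_{k,j}`, we have `(1/d)·∑_k (-θ_k·A_{k,1} - A_{k,2}) = χ_Σ`,
where `A_{k,2} = 0` if `e_k = 1`. -/
theorem stmt16 {N n r : ℕ} (A : Matrix (Fin N) (Fin N) ℤ)
    (hpos : ∀ i j, 0 ≤ A i j) (hdiag : ∀ i, 1 ≤ A i i)
    -- `I` has series Euler characteristic: the rational function is defined at `z = 0`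
    (hSEC : (detAsubIz (A.map ((↑) : ℤ → ℂ))).rootMultiplicity 0
      ≤ (sumAdjAsubIz (A.map ((↑) : ℤ → ℂ))).rootMultiplicity 0)
    (θ : Fin n → ℂ) (hθ : Function.Injective θ) (e : Fin n → ℕ) (he : ∀ k, 1 ≤ e k)
    (d : ℂ) (hd : d ≠ 0) (hr : r ≤ N)
    (hdegdet : (detIsubAz (A.map ((↑) : ℤ → ℂ))).natDegree = N - r)
    (hfact : detIsubAz (A.map ((↑) : ℤ → ℂ)) = C d * ∏ k, (X - C (θ k)) ^ (e k))
    (Acoef : Fin n → ℕ → ℂ) (hA2 : ∀ k, e k = 1 → Acoef k 2 = 0)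
    (hpf : algebraMap ℂ[X] (RatFunc ℂ) (sumAdjIsubAzA (A.map ((↑) : ℤ → ℂ)))
          / algebraMap ℂ[X] (RatFunc ℂ) (detIsubAz (A.map ((↑) : ℤ → ℂ)))
        = RatFunc.C d⁻¹ * ∑ k, ∑ j ∈ Finset.Icc 1 (e k),
            RatFunc.C (Acoef k j) / (RatFunc.X - RatFunc.C (θ k)) ^ j) :
    d⁻¹ * ∑ k, (- θ k * Acoef k 1 - Acoef k 2) = seriesEuler (A.map ((↑) : ℤ → ℂ)) := by
  classical
  set A' : Matrix (Fin N) (Fin N) ℂ := A.map ((↑) : ℤ → ℂ) with hA'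
  rw [rootMultiplicity_eq_natTrailingDegree', rootMultiplicity_eq_natTrailingDegree'] at hSEC
  set g : ℂ[X] := detIsubAz A' with hg
  set Q : ℂ[X] := detAsubIz A' with hQdef
  set P : ℂ[X] := sumAdjAsubIz A' with hPdef
  set E : ℕ := ∑ k, e k with hE
  set T : ℂ := ∑ l, (e l : ℂ) * θ l with hT
  have hgE : g.natDegree = E := by
    rw [hfact, natDegree_C_mul hd, W_natDegree]
  have hEr : E = N - r := by rw [← hgE, hdegdet]
  -- coefficients of Q in terms of g
  have hQcoeff : ∀ i ≤ N, Q.coeff i = (-1 : ℂ) ^ N * g.coeff (N - i) := by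
    intro i hi
    have h1 := congrArg (fun p => coeff p (N - i)) (reflect_Q A')
    simp only [coeff_reflect, coeff_C_mul] at h1
    rwa [revAt_le (Nat.sub_le N i), Nat.sub_sub_self hi] at h1
  -- coefficients of P in terms of tpoly
  have hPcoeff : ∀ i, P.coeff i = (-1 : ℂ) ^ (N - 1) * (tpoly A').coeff (revAt (N - 1) i) := by
    intro i
    rw [show P = _ from reflect_P A', coeff_C_mul, coeff_reflect]
  rcases Nat.eq_zero_or_pos E with hE0 | hE1
  · -- degenerate case E = 0
    haveI hempty : IsEmpty (Fin n) := by
      refine ⟨fun k => ?_⟩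
      have h1 : e k ≤ E := Finset.single_le_sum (fun i _ => Nat.zero_le _) (Finset.mem_univ k)
      have := he k
      omega
    have hsum0 : ∑ k, (- θ k * Acoef k 1 - Acoef k 2) = 0 := by
      rw [Finset.univ_eq_empty, Finset.sum_empty]
    have hgC : g = C d := by
      rw [hfact, Finset.univ_eq_empty, Finset.prod_empty, mul_one]
    rcases Nat.eq_zero_or_pos N with hN0 | hN1
    · -- N = 0
      haveI hemptyN : IsEmpty (Fin N) := ⟨fun i => by have := i.2; omega⟩
      have hP0 : P = 0 := by
        rw [hPdef, sumAdjAsubIz, sumEntries, Finset.univ_eq_empty, Finset.sum_empty]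
      rw [hsum0, mul_zero, seriesEuler]
      rw [show sumAdjAsubIz A' = P from rfl, hP0, RatFunc.mk_eq_div, map_zero, zero_div]
      simp
    · -- N ≥ 1 : contradiction with hSEC
      exfalso
      have hNE : N = r := by omega
      have hQr : Q.coeff N = (-1 : ℂ) ^ N * d := by
        rw [hQcoeff N le_rfl, Nat.sub_self, hgC, coeff_C_zero]
      have hQ0 : Q ≠ 0 := by
        intro h
        rw [h, coeff_zero] at hQr
        exact hd (by
          have hu : ((-1 : ℂ) ^ N) ≠ 0 := pow_ne_zero _ (by norm_num)
          field_simp at hQr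
          exact (mul_eq_zero.mp hQr.symm).resolve_left hu)
      have hQlow : ∀ m < N, Q.coeff m = 0 := by
        intro m hm
        rw [hQcoeff m (le_of_lt hm), hgC, coeff_C, if_neg (by omega), mul_zero]
      have hQntd : N ≤ Q.natTrailingDegree := le_natTrailingDegree hQ0 hQlow
      have hPntd : N ≤ P.natTrailingDegree := hQntd.trans hSEC
      by_cases hP0 : P = 0
      · rw [hP0, natTrailingDegree_zero] at hPntd; omega
      · have h1 : P.natTrailingDegree ≤ P.natDegree := natTrailingDegree_le_natDegree _
        have h2 : P.natDegree ≤ N - 1 := by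
          rw [show P = _ from reflect_P A']
          refine natDegree_mul_le.trans ?_
          rw [natDegree_C, zero_add]
          exact natDegree_reflect_le _ (natDegree_tpoly_le A')
        omega
  · -- main case E ≥ 1
    have hrN : r < N := by omega
    have hENr : E + r = N := by omega
    have hstar : sumAdjIsubAzA A' = ∑ k, ∑ j ∈ Finset.Icc 1 (e k),
        C (Acoef k j) * ppoly θ e k j :=
      star_identity A' θ e d Acoef hd hfact hpf
    have htdef : tpoly A' = (N : ℂ[X]) * g + X * sumAdjIsubAzA A' := t_eq A'
    have hcoefft : ∀ i, (tpoly A').coeff i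
        = (N : ℂ) * g.coeff i + (X * sumAdjIsubAzA A').coeff i := by
      intro i
      rw [htdef, coeff_add, ← C_eq_natCast, coeff_C_mul]
    have hgtop : g.coeff E = d := by
      rw [hfact, coeff_C_mul, W_coeff_top θ e, mul_one]
    have hgnext : g.coeff (E - 1) = d * (-T) := by
      rw [hfact, coeff_C_mul, W_coeff_next θ e hE1]
    have htE : (tpoly A').coeff E = (N : ℂ) * d + ∑ k, Acoef k 1 := by
      rw [hcoefft, hgtop, hstar, coeffE_XS θ e Acoef he hE1]
    have htE1 : (tpoly A').coeff (E - 1)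
        = (N : ℂ) * (d * (-T)) + ∑ k, (Acoef k 1 * (θ k - T) + Acoef k 2) := by
      rw [hcoefft, hgnext, hstar, coeffE1_XS θ e Acoef he hA2]
    -- trailing degree facts
    have hQr : Q.coeff r = (-1 : ℂ) ^ N * d := by
      rw [hQcoeff r (by omega), show N - r = E by omega, hgtop]
    have hQ0 : Q ≠ 0 := by
      intro h
      rw [h, coeff_zero] at hQr
      have hu : ((-1 : ℂ) ^ N) ≠ 0 := pow_ne_zero _ (by norm_num)
      exact hd (by field_simp at hQr; exact (mul_eq_zero.mp hQr.symm).resolve_left hu)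
    have hQlow : ∀ m < r, Q.coeff m = 0 := by
      intro m hm
      rw [hQcoeff m (by omega)]
      have : g.natDegree < N - m := by omega
      rw [coeff_eq_zero_of_natDegree_lt this, mul_zero]
    have hQntd : r ≤ Q.natTrailingDegree := le_natTrailingDegree hQ0 hQlow
    have hPntd : r ≤ P.natTrailingDegree := hQntd.trans hSEC
    -- S1 = -(N d)
    have hS1 : (N : ℂ) * d + ∑ k, Acoef k 1 = 0 := by
      rcases Nat.eq_zero_or_pos r with hr0 | hr1
      · have hEN : E = N := by omega
        have h1 : (tpoly A').coeff E = 0 := by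
          apply coeff_eq_zero_of_natDegree_lt
          have := natDegree_tpoly_le A'
          omega
        rw [htE] at h1
        exact h1
      · have h3 : P.coeff (r - 1) = 0 :=
          coeff_eq_zero_of_lt_natTrailingDegree (by omega)
        rw [hPcoeff (r - 1), revAt_le (by omega : r - 1 ≤ N - 1),
          show N - 1 - (r - 1) = E by omega] at h3
        have hu : ((-1 : ℂ) ^ (N - 1)) ≠ 0 := pow_ne_zero _ (by norm_num)
        rcases mul_eq_zero.mp h3 with h | h
        · exact absurd h hu
        · rw [htE] at h; exact h
    have htE1' : (tpoly A').coeff (E - 1) = (∑ k, θ k * Acoef k 1) + ∑ k, Acoef k 2 := by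
      rw [htE1]
      have h1 : ∀ k ∈ Finset.univ, Acoef k 1 * (θ k - T) + Acoef k 2
          = θ k * Acoef k 1 + (-T) * Acoef k 1 + Acoef k 2 := fun k _ => by ring
      rw [Finset.sum_congr rfl h1, Finset.sum_add_distrib, Finset.sum_add_distrib,
        ← Finset.mul_sum]
      have hS1' : ∑ k, Acoef k 1 = -((N : ℂ) * d) := by linear_combination hS1
      rw [hS1']
      ring
    -- X^r divides P and Q
    obtain ⟨Q₁, hQ₁⟩ : X ^ r ∣ Q := X_pow_dvd_iff.mpr hQlow
    obtain ⟨P₁, hP₁⟩ : X ^ r ∣ P := X_pow_dvd_iff.mpr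
      (fun i hi => coeff_eq_zero_of_lt_natTrailingDegree (lt_of_lt_of_le hi hPntd))
    have hcoeffQ₁ : Q₁.coeff 0 = (-1 : ℂ) ^ N * d := by
      have h1 := coeff_X_pow_mul Q₁ r 0
      rw [zero_add] at h1
      rw [← hQr, hQ₁, h1]
    have hcoeffP₁ : P₁.coeff 0 = (-1 : ℂ) ^ (N - 1) * ((∑ k, θ k * Acoef k 1) + ∑ k, Acoef k 2) := by
      have h1 := coeff_X_pow_mul P₁ r 0
      rw [zero_add] at h1
      rw [← h1, ← hP₁, hPcoeff r, revAt_le (by omega : r ≤ N - 1),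
        show N - 1 - r = E - 1 by omega, htE1']
    have hQ₁ev : Q₁.eval 0 = (-1 : ℂ) ^ N * d := by
      rw [← coeff_zero_eq_eval_zero, hcoeffQ₁]
    have hP₁ev : P₁.eval 0 = (-1 : ℂ) ^ (N - 1) * ((∑ k, θ k * Acoef k 1) + ∑ k, Acoef k 2) := by
      rw [← coeff_zero_eq_eval_zero, hcoeffP₁]
    have hQ₁ev0 : Q₁.eval 0 ≠ 0 := by
      rw [hQ₁ev]
      exact mul_ne_zero (pow_ne_zero _ (by norm_num)) hd
    have hQ₁ne : Q₁ ≠ 0 := by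
      intro h
      rw [h, eval_zero] at hQ₁ev0
      exact hQ₁ev0 rfl
    set f : RatFunc ℂ := RatFunc.mk P Q with hf
    have hfeq : f = algebraMap ℂ[X] (RatFunc ℂ) P₁ / algebraMap ℂ[X] (RatFunc ℂ) Q₁ := by
      rw [hf, RatFunc.mk_eq_div, hP₁, hQ₁, _root_.map_mul, _root_.map_mul,
        mul_div_mul_left _ _ (RatFunc.algebraMap_ne_zero (pow_ne_zero r X_ne_zero))]
    have hdenomdvd : f.denom ∣ Q₁ := (RatFunc.denom_dvd hQ₁ne).mpr ⟨P₁, hfeq⟩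
    have hdenom0 : f.denom.eval 0 ≠ 0 := by
      obtain ⟨c, hc⟩ := hdenomdvd
      intro h0
      apply hQ₁ev0
      rw [hc, eval_mul, h0, zero_mul]
    have hcross : f.num * Q₁ = P₁ * f.denom := by
      apply RatFunc.algebraMap_injective ℂ
      rw [_root_.map_mul, _root_.map_mul]
      refine (div_eq_div_iff (RatFunc.algebraMap_ne_zero (RatFunc.denom_ne_zero f))
        (RatFunc.algebraMap_ne_zero hQ₁ne)).mp ?_
      rw [RatFunc.num_div_denom, hfeq]
    have heval : f.num.eval 0 * Q₁.eval 0 = P₁.eval 0 * f.denom.eval 0 := by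
      have h1 := congrArg (Polynomial.eval 0) hcross
      simpa [eval_mul] using h1
    have hser : seriesEuler A' = f.num.eval 0 / f.denom.eval 0 := rfl
    have hdiv : f.num.eval 0 / f.denom.eval 0 = P₁.eval 0 / Q₁.eval 0 := by
      rw [div_eq_div_iff hdenom0 hQ₁ev0]
      linear_combination heval
    rw [hser, hdiv, hP₁ev, hQ₁ev]
    have hsumneg : ∑ k, (- θ k * Acoef k 1 - Acoef k 2)
        = -((∑ k, θ k * Acoef k 1) + ∑ k, Acoef k 2) := by
      rw [← Finset.sum_add_distrib, ← Finset.sum_neg_distrib]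
      exact Finset.sum_congr rfl fun k _ => by ring
    rw [hsumneg]
    have hpow : (-1 : ℂ) ^ N = (-1) ^ (N - 1) * (-1) := by
      rw [← pow_succ]
      congr 1
      omega
    have hu : ((-1 : ℂ) ^ (N - 1)) ≠ 0 := pow_ne_zero _ (by norm_num)
    rw [hpow]
    field_simp
end
end
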